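/- Let N, W, L be positive integers, g : Z/NZ → C supported in an interval of length W (mod N), and let [a₁,b₁], [a₂,b₂] ⊆ {0,...,N-1} be nonoverlapping intervals such that a₂ - b₁ ≥ W and a₁ - b₂ ≥ W (differences interpreted mod N). If x is supported on [a₁,b₁] and y is supported on [a₂,b₂], then for all m, k: |STFT of (x+y)|(m,k) = |STFT of (x−y)|(m,k), where the STFT is X_g(m,k) = Σ_{n=0}^{N-1} x[n] g[mL-n] e^{-2πi kn/N}. -/
import Mathlib


open Complex Finset

/-- The STFT with hop length `L`. -/
noncomputable def stftL (N L : ℕ) [NeZero N] (g x : ZMod N → ℂ) (m : ℕ) (k : ZMod N) : ℂ :=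
  ∑ n : ZMod N, x n * g (((m * L : ℕ) : ZMod N) - n) *
    Complex.exp (-2 * (Real.pi : ℂ) * Complex.I * (k.val : ℂ) * (n.val : ℂ) / (N : ℂ))

lemma stftL_add (N L : ℕ) [NeZero N] (g x y : ZMod N → ℂ) (m : ℕ) (k : ZMod N) :
    stftL N L g (fun n => x n + y n) m k = stftL N L g x m k + stftL N L g y m k := by
  simp [stftL, add_mul, Finset.sum_add_distrib]

lemma stftL_sub (N L : ℕ) [NeZero N] (g x y : ZMod N → ℂ) (m : ℕ) (k : ZMod N) :
    stftL N L g (fun n => x n - y n) m k = stftL N L g x m k - stftL N L g y m k := by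
  simp [stftL, sub_mul, Finset.sum_sub_distrib]

lemma stftL_eq_zero (N L : ℕ) [NeZero N] (g x : ZMod N → ℂ) (m : ℕ) (k : ZMod N)
    (h : ∀ n : ZMod N, x n * g (((m * L : ℕ) : ZMod N) - n) = 0) :
    stftL N L g x m k = 0 :=
  Finset.sum_eq_zero fun n _ => by rw [h n, zero_mul]

lemma sep_contradiction (N W a₁ b₁ a₂ b₂ t₁ t₂ j₁ j₂ : ℤ)
    (hN : 0 < N) (hW : 0 < W) (ha₁ : 0 ≤ a₁) (ha₂ : 0 ≤ a₂)
    (h₁ : a₁ ≤ b₁) (h₁' : b₁ ≤ N - 1) (h₂ : a₂ ≤ b₂) (h₂' : b₂ ≤ N - 1)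
    (hd : b₁ < a₂ ∨ b₂ < a₁)
    (hsep₁ : W ≤ (a₂ - b₁) % N) (hsep₂ : W ≤ (a₁ - b₂) % N)
    (ht₁ : a₁ ≤ t₁) (ht₁' : t₁ ≤ b₁) (ht₂ : a₂ ≤ t₂) (ht₂' : t₂ ≤ b₂)
    (hj₁ : 0 ≤ j₁) (hj₁' : j₁ < W) (hj₂ : 0 ≤ j₂) (hj₂' : j₂ < W)
    (hdvd : N ∣ (t₂ + j₂) - (t₁ + j₁)) : False := by
  rcases hd with hd | hd
  · have e1 : (a₂ - b₁) % N = a₂ - b₁ := Int.emod_eq_of_lt (by omega) (by omega)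
    have e2 : (a₁ - b₂) % N = a₁ - b₂ + N := by
      have h := Int.add_mul_emod_self_left (a := a₁ - b₂) (b := N) (c := 1)
      rw [mul_one] at h
      rw [← h]
      exact Int.emod_eq_of_lt (by omega) (by omega)
    rw [e1] at hsep₁; rw [e2] at hsep₂
    have := Int.le_of_dvd (by omega) hdvd
    omega
  · have e1 : (a₁ - b₂) % N = a₁ - b₂ := Int.emod_eq_of_lt (by omega) (by omega)
    have e2 : (a₂ - b₁) % N = a₂ - b₁ + N := by
      have h := Int.add_mul_emod_self_left (a := a₂ - b₁) (b := N) (c := 1)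
      rw [mul_one] at h
      rw [← h]
      exact Int.emod_eq_of_lt (by omega) (by omega)
    rw [e1] at hsep₂; rw [e2] at hsep₁
    have hdvd' : N ∣ (t₁ + j₁) - (t₂ + j₂) := by
      simpa [neg_sub] using Int.dvd_neg.mpr hdvd
    have := Int.le_of_dvd (by omega) hdvd'
    omega

/-- Fundamental sparse ambiguity: if `x` and `y` are supported on two nonoverlapping intervals
of `{0,...,N-1}` whose circular separations are at least the window length `W`, then `x + y`
and `x - y` have the same STFT magnitudes, for any hop length `L`. -/
theorem stft_magnitude_sign_ambiguity (N W L : ℕ) (hN : 0 < N) [NeZero N] (hW : 0 < W)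
    (hL : 0 < L) (aW : ZMod N) (g : ZMod N → ℂ)
    (hsupp : ∀ n : ZMod N, g n ≠ 0 → ∃ j : ℕ, j < W ∧ n = aW + (j : ZMod N))
    (a₁ b₁ a₂ b₂ : ℕ) (h₁ : a₁ ≤ b₁) (h₁' : b₁ ≤ N - 1) (h₂ : a₂ ≤ b₂) (h₂' : b₂ ≤ N - 1)
    (hdisj : Disjoint (Finset.Icc a₁ b₁) (Finset.Icc a₂ b₂))
    (hsep₁ : (W : ℤ) ≤ ((a₂ : ℤ) - (b₁ : ℤ)) % (N : ℤ))
    (hsep₂ : (W : ℤ) ≤ ((a₁ : ℤ) - (b₂ : ℤ)) % (N : ℤ))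
    (x y : ZMod N → ℂ)
    (hx : ∀ n : ZMod N, x n ≠ 0 → ∃ t : ℕ, a₁ ≤ t ∧ t ≤ b₁ ∧ n = (t : ZMod N))
    (hy : ∀ n : ZMod N, y n ≠ 0 → ∃ t : ℕ, a₂ ≤ t ∧ t ≤ b₂ ∧ n = (t : ZMod N)) :
    ∀ (m : ℕ) (k : ZMod N),
      ‖stftL N L g (fun n => x n + y n) m k‖ = ‖stftL N L g (fun n => x n - y n) m k‖ := by
  intro m k
  -- disjointness gives the intervals are ordered one way or the other
  have hd : b₁ < a₂ ∨ b₂ < a₁ := by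
    have hA : ¬(a₂ ≤ a₁ ∧ a₁ ≤ b₂) := by
      intro h
      exact Finset.disjoint_left.mp hdisj (Finset.mem_Icc.mpr ⟨le_refl _, h₁⟩)
        (Finset.mem_Icc.mpr ⟨h.1, h.2⟩)
    have hB : ¬(a₁ ≤ a₂ ∧ a₂ ≤ b₁) := by
      intro h
      exact Finset.disjoint_left.mp hdisj (Finset.mem_Icc.mpr ⟨h.1, h.2⟩)
        (Finset.mem_Icc.mpr ⟨le_refl _, h₂⟩)
    omega
  have key : (∀ n : ZMod N, x n * g (((m * L : ℕ) : ZMod N) - n) = 0) ∨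
      (∀ n : ZMod N, y n * g (((m * L : ℕ) : ZMod N) - n) = 0) := by
    by_contra hcon
    push_neg at hcon
    obtain ⟨⟨n₁, hn₁⟩, ⟨n₂, hn₂⟩⟩ := hcon
    rw [mul_ne_zero_iff] at hn₁ hn₂
    obtain ⟨t₁, ht₁, ht₁', hnt₁⟩ := hx n₁ hn₁.1
    obtain ⟨t₂, ht₂, ht₂', hnt₂⟩ := hy n₂ hn₂.1
    obtain ⟨j₁, hj₁, hgj₁⟩ := hsupp _ hn₁.2
    obtain ⟨j₂, hj₂, hgj₂⟩ := hsupp _ hn₂.2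
    have eq₁ : ((m * L : ℕ) : ZMod N) = n₁ + (aW + (j₁ : ZMod N)) :=
      sub_eq_iff_eq_add'.mp hgj₁
    have eq₂ : ((m * L : ℕ) : ZMod N) = n₂ + (aW + (j₂ : ZMod N)) :=
      sub_eq_iff_eq_add'.mp hgj₂
    rw [hnt₁] at eq₁
    rw [hnt₂] at eq₂
    have hcast : ((t₁ + j₁ : ℕ) : ZMod N) = ((t₂ + j₂ : ℕ) : ZMod N) := by
      push_cast
      have h := eq₁.symm.trans eq₂
      linear_combination h
    have hmodeq : (t₁ + j₁) ≡ (t₂ + j₂) [MOD N] :=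
      (ZMod.natCast_eq_natCast_iff _ _ _).mp hcast
    have hdvd : (N : ℤ) ∣ ((t₂ + j₂ : ℕ) : ℤ) - ((t₁ + j₁ : ℕ) : ℤ) := hmodeq.dvd
    push_cast at hdvd
    exact sep_contradiction N W a₁ b₁ a₂ b₂ t₁ t₂ j₁ j₂
      (by omega) (by omega) (by omega) (by omega) (by omega) (by omega) (by omega) (by omega)
      (by omega) hsep₁ hsep₂ (by omega) (by omega) (by omega) (by omega)
      (by omega) (by omega) (by omega) (by omega) (by exact_mod_cast hdvd)
  rcases key with h | h
  · rw [stftL_add, stftL_sub, stftL_eq_zero N L g x m k h, zero_add, zero_sub, norm_neg]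
  · rw [stftL_add, stftL_sub, stftL_eq_zero N L g y m k h, add_zero, sub_zero]
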